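/- A functor S : A ⥤ B is bijective on objects if and only if it has the diagonal fill-in property with respect to every fully faithful functor: that is, if and only if for every fully faithful functor J : C ⥤ D and all functors U : A ⥤ C and V : B ⥤ D with U ⋙ J = S ⋙ V, there exists a unique functor W : B ⥤ C with S ⋙ W = U and W ⋙ J = V. -/

import Mathlib

open CategoryTheory

universe v₁ v₂ u₁ u₂

/-- A functor `S : A ⥤ B` is bijective on objects if and only if it has the diagonal
fill-in property with respect to every fully faithful functor. -/
theorem bijective_on_objects_iff_fill_in {A : Type u₁} {B : Type u₂}
    [Category.{v₁} A] [Category.{v₂} B] (S : A ⥤ B) :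
    Function.Bijective S.obj ↔
      ∀ (C D : Type (max u₁ u₂ v₁ v₂)) (_ : Category.{max u₁ u₂ v₁ v₂} C)
        (_ : Category.{max u₁ u₂ v₁ v₂} D) (J : C ⥤ D), J.Full → J.Faithful →
        ∀ (U : A ⥤ C) (V : B ⥤ D), U ⋙ J = S ⋙ V →
          ∃! W : B ⥤ C, S ⋙ W = U ∧ W ⋙ J = V := by
  constructor
  · intro hbij C D instC instD J hfull hfaith U V hUV
    haveI := hfull; haveI := hfaith
    let e : A ≃ B := Equiv.ofBijective _ hbij
    have hob : ∀ b : B, J.obj (U.obj (e.symm b)) = V.obj b := by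
      intro b
      have h1 := Functor.congr_obj hUV (e.symm b)
      simp only [Functor.comp_obj] at h1
      rw [h1]
      congr 1
      exact e.apply_symm_apply b
    let W : B ⥤ C :=
      { obj := fun b => U.obj (e.symm b)
        map := fun {b b'} f =>
          J.preimage (eqToHom (hob b) ≫ V.map f ≫ eqToHom (hob b').symm)
        map_id := by
          intro b
          apply J.map_injective
          simp
        map_comp := by
          intro X Y Z f g
          apply J.map_injective
          simp }
    have hSW : S ⋙ W = U := by
      apply CategoryTheory.Functor.ext
      case h_obj =>
        intro a
        show U.obj (e.symm (S.obj a)) = U.obj a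
        congr 1
        exact e.symm_apply_apply a
      case h_map =>
        intro X Y f
        apply J.map_injective
        have hf := Functor.congr_hom hUV f
        simp only [Functor.comp_map] at hf
        simp [W, eqToHom_map, hf]
    have hWJ : W ⋙ J = V := by
      apply CategoryTheory.Functor.ext
      case h_obj => exact hob
      case h_map =>
        intro X Y f
        simp [W]
    refine ⟨W, ⟨hSW, hWJ⟩, ?_⟩
    rintro W' ⟨h1, h2⟩
    apply CategoryTheory.Functor.ext
    case h_obj =>
      intro b
      have hb : S.obj (e.symm b) = b := e.apply_symm_apply b
      have := Functor.congr_obj h1 (e.symm b)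
      simp only [Functor.comp_obj] at this
      rw [← hb, this]
      exact (congrArg U.obj (e.symm_apply_apply (e.symm b))).symm
    case h_map =>
      intro X Y f
      apply J.map_injective
      have hf := Functor.congr_hom h2 f
      simp only [Functor.comp_map] at hf
      simp [W, eqToHom_map, hf]
  · intro hfill
    letI : Category (ULift.{max u₁ u₂ v₁ v₂} B) := uliftCategory B
    let D := ULiftHom.{max u₁ u₂ v₁ v₂} (ULift.{max u₁ u₂ v₁ v₂} B)
    let F : ULift.{max u₁ u₂ v₁ v₂} A → D :=
      fun a => ULiftHom.objUp (ULift.up (S.obj a.down))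
    let J : InducedCategory D F ⥤ D := inducedFunctor F
    let U : A ⥤ InducedCategory D F :=
      { obj := fun a => ⟨a⟩
        map := fun {a a'} f => InducedCategory.homMk (ULift.up (S.map f))
        map_id := by intro a; dsimp; rw [S.map_id]; rfl
        map_comp := by intro X Y Z f g; dsimp; rw [S.map_comp]; rfl }
    let V : B ⥤ D := ULift.upFunctor ⋙ ULiftHom.up
    have hcomm : U ⋙ J = S ⋙ V := rfl
    obtain ⟨W, ⟨hW1, hW2⟩, -⟩ :=
      hfill (InducedCategory D F) D inferInstance inferInstance J
        inferInstance inferInstance U V hcomm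
    constructor
    · intro a a' h
      have ha := Functor.congr_obj hW1 a
      have ha' := Functor.congr_obj hW1 a'
      simp only [Functor.comp_obj] at ha ha'
      rw [h] at ha
      exact congrArg ULift.down (ha.symm.trans ha')
    · intro b
      have hb := Functor.congr_obj hW2 b
      simp only [Functor.comp_obj] at hb
      exact ⟨(W.obj b).down, congrArg ULift.down hb⟩
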